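/- Let a ∈ (0, 1/2) and consider the function f(y) = y^{−a} on (0,1]. For the β-graded mesh with nodes y_k = (k/N)^β (β ≥ 1) and piecewise-constant interpolant Π⁰f given on each interval (y_{k−1}, y_k] by the mean value of f, the L²(0,1)-error satisfies ‖f − Π⁰f‖_{L²(0,1)} ≤ C · N^{−min{β(1/2 − a), 1}} for a constant C independent of N (with an arbitrarily small loss ε > 0 in the exponent in the limiting case). -/

import Mathlib

open Real MeasureTheory

/-- `v^β - u^β ≤ β * v^β * ((v-u)/v)` for `0 ≤ u ≤ v`, `v > 0`, `β ≥ 1`. -/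
lemma aux_rpow_sub (β : ℝ) (hβ : 1 ≤ β) {u v : ℝ} (hu : 0 ≤ u) (huv : u ≤ v) (hv : 0 < v) :
    v ^ β - u ^ β ≤ β * v ^ β * ((v - u) / v) := by
  have ht0 : 0 ≤ u / v := div_nonneg hu hv.le
  have key : 1 + β * (u / v - 1) ≤ (u / v) ^ β := by
    have := one_add_mul_self_le_rpow_one_add (s := u / v - 1) (by linarith) hβ
    simpa using this
  have hmul : u ^ β = v ^ β * (u / v) ^ β := by
    rw [← Real.mul_rpow hv.le ht0, mul_div_cancel₀ _ hv.ne']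
  have hvb : 0 ≤ v ^ β := Real.rpow_nonneg hv.le β
  have : v ^ β * (1 + β * (u / v - 1)) ≤ u ^ β := by
    rw [hmul]; exact mul_le_mul_of_nonneg_left key hvb
  have hdiv : (v - u) / v = 1 - u / v := by field_simp
  rw [hdiv]; nlinarith [this]

/-- telescoping sum bound: `∑_{k=2}^N k^(δ-1) ≤ N^δ / δ` for `0 < δ ≤ 1`. -/
lemma aux_sum_rpow (δ : ℝ) (hδ0 : 0 < δ) (hδ1 : δ ≤ 1) :
    ∀ N : ℕ, ∑ k ∈ Finset.Icc 2 N, (k : ℝ) ^ (δ - 1) ≤ (N : ℝ) ^ δ / δ := by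
  intro N
  induction N with
  | zero => simp [Real.zero_rpow hδ0.ne']
  | succ n ih =>
    rcases Nat.lt_or_ge n 1 with h | h
    · interval_cases n
      · have : Finset.Icc 2 1 = (∅ : Finset ℕ) := by decide
        rw [this]
        simp [Real.one_rpow]
        positivity
    · rw [Finset.sum_Icc_succ_top (by omega)]
      have hm : (0:ℝ) < (n:ℝ) + 1 := by positivity
      have key : ((n:ℝ)) ^ δ ≤ ((n:ℝ) + 1) ^ δ - δ * ((n:ℝ) + 1) ^ (δ - 1) := by
        have hs : (-1 : ℝ) ≤ -1 / ((n:ℝ) + 1) := by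
          rw [neg_div]
          have : 1 / ((n:ℝ)+1) ≤ 1 := by
            have h1 : (1:ℝ) ≤ (n:ℝ) := by exact_mod_cast h
            rw [div_le_one hm]; linarith
          linarith
        have hb := rpow_one_add_le_one_add_mul_self hs hδ0.le hδ1
        have h1 : (1 : ℝ) + -1 / ((n:ℝ)+1) = (n:ℝ) / ((n:ℝ)+1) := by field_simp; ring
        rw [h1] at hb
        have hmul : ((n:ℝ)) ^ δ = ((n:ℝ)+1) ^ δ * ((n:ℝ)/((n:ℝ)+1)) ^ δ := by
          rw [← Real.mul_rpow hm.le (by positivity), mul_div_cancel₀ _ hm.ne']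
        have hpow : ((n:ℝ)+1) ^ (δ - 1) = ((n:ℝ)+1) ^ δ / ((n:ℝ)+1) :=
          Real.rpow_sub_one hm.ne' δ
        have hvb : (0:ℝ) ≤ ((n:ℝ)+1) ^ δ := Real.rpow_nonneg hm.le δ
        rw [hmul, hpow]
        calc ((n:ℝ)+1) ^ δ * ((n:ℝ)/((n:ℝ)+1)) ^ δ
            ≤ ((n:ℝ)+1) ^ δ * (1 + δ * (-1/((n:ℝ)+1))) :=
              mul_le_mul_of_nonneg_left hb hvb
          _ = ((n:ℝ)+1) ^ δ - δ * (((n:ℝ)+1) ^ δ / ((n:ℝ)+1)) := by ring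
      have : ((n:ℝ) + 1) ^ (δ - 1) ≤ (((n:ℝ)+1) ^ δ - (n:ℝ) ^ δ) / δ := by
        rw [le_div_iff₀ hδ0]; nlinarith
      push_cast
      calc ∑ k ∈ Finset.Icc 2 n, (k:ℝ) ^ (δ-1) + ((n:ℝ)+1) ^ (δ-1)
          ≤ (n:ℝ) ^ δ / δ + (((n:ℝ)+1) ^ δ - (n:ℝ) ^ δ) / δ := add_le_add ih this
        _ = ((n:ℝ)+1) ^ δ / δ := by ring

lemma aux_err (a : ℝ) (ha0 : 0 < a) (ha1 : a < 1) {x y : ℝ} (hx : 0 < x) (hxy : x < y) :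
    ∫ z in Set.Ioc x y, (z ^ (-a) - (y - x)⁻¹ * ∫ z in Set.Ioc x y, z ^ (-a)) ^ 2
      ≤ (x ^ (-a-1) * (y - x)) ^ 2 * (y - x) := by
  have hy : 0 < y := hx.trans hxy
  have hlen : 0 < y - x := by linarith
  have hvol : volume (Set.Ioc x y) = ENNReal.ofReal (y - x) := Real.volume_Ioc
  have hcont : ContinuousOn (fun z : ℝ => z ^ (-a)) (Set.Icc x y) := by
    apply ContinuousOn.rpow_const continuousOn_id
    intro z hz; exact Or.inl (ne_of_gt (lt_of_lt_of_le hx hz.1))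
  have hint : IntegrableOn (fun z : ℝ => z ^ (-a)) (Set.Ioc x y) volume :=
    (hcont.integrableOn_Icc).mono_set Set.Ioc_subset_Icc_self
  have hup : ∀ z ∈ Set.Ioc x y, z ^ (-a) ≤ x ^ (-a) := fun z hz =>
    Real.rpow_le_rpow_of_nonpos hx hz.1.le (by linarith)
  have hlo : ∀ z ∈ Set.Ioc x y, y ^ (-a) ≤ z ^ (-a) := fun z hz =>
    Real.rpow_le_rpow_of_nonpos (hx.trans hz.1) hz.2 (by linarith)
  have hconstint : ∀ r : ℝ, ∫ _ in Set.Ioc x y, r ∂volume = (y - x) * r := by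
    intro r
    rw [setIntegral_const, measureReal_def, hvol, ENNReal.toReal_ofReal hlen.le, smul_eq_mul]
  have hci : ∀ r : ℝ, IntegrableOn (fun _ : ℝ => r) (Set.Ioc x y) volume := fun r =>
    integrableOn_const (by rw [hvol]; exact ENNReal.ofReal_ne_top)
  have hIup : (∫ z in Set.Ioc x y, z ^ (-a)) ≤ (y - x) * x ^ (-a) := by
    rw [← hconstint]
    exact setIntegral_mono_on hint (hci _) measurableSet_Ioc hup
  have hIlo : (y - x) * y ^ (-a) ≤ ∫ z in Set.Ioc x y, z ^ (-a) := by
    rw [← hconstint]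
    exact setIntegral_mono_on (hci _) hint measurableSet_Ioc hlo
  set c : ℝ := (y - x)⁻¹ * ∫ z in Set.Ioc x y, z ^ (-a) with hc
  have hcup : c ≤ x ^ (-a) := by
    rw [hc, inv_mul_le_iff₀ hlen]; linarith [hIup]
  have hclo : y ^ (-a) ≤ c := by
    rw [hc, le_inv_mul_iff₀ hlen]; linarith [hIlo]
  -- the key derivative-free bound
  have hD : x ^ (-a) - y ^ (-a) ≤ x ^ (-a-1) * (y - x) := by
    have hb : 0 < x / y := div_pos hx hy
    have hb1 : x / y ≤ 1 := (div_le_one hy).mpr hxy.le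
    have h1 : x / y ≤ (x / y) ^ a := by
      nth_rewrite 1 [← Real.rpow_one (x / y)]
      exact Real.rpow_le_rpow_of_exponent_ge hb hb1 ha1.le
    have hxa : (0:ℝ) < x ^ a := Real.rpow_pos_of_pos hx a
    have hya : (0:ℝ) < y ^ a := Real.rpow_pos_of_pos hy a
    have hxna : (0:ℝ) < x ^ (-a) := Real.rpow_pos_of_pos hx _
    have hid : y ^ (-a) = x ^ (-a) * (x / y) ^ a := by
      rw [Real.div_rpow hx.le hy.le, Real.rpow_neg hx.le, Real.rpow_neg hy.le]
      field_simp
    have h2 : x ^ (-a) * (x / y) ≤ y ^ (-a) := by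
      rw [hid]; exact mul_le_mul_of_nonneg_left h1 hxna.le
    have hpow : x ^ (-a-1) = x ^ (-a) / x := by
      rw [show -a-1 = -a - 1 by ring, Real.rpow_sub_one hx.ne' (-a)]
    rw [hpow]
    have e1 : 1 - x / y = (y - x) / y := by field_simp
    have hdd : (y - x) / y ≤ (y - x) / x := by gcongr
    have h3 : x ^ (-a) * (1 - x / y) ≤ x ^ (-a) / x * (y - x) := by
      rw [e1]
      calc x ^ (-a) * ((y - x) / y) ≤ x ^ (-a) * ((y - x) / x) :=
            mul_le_mul_of_nonneg_left hdd hxna.le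
        _ = x ^ (-a) / x * (y - x) := by ring
    have e2 : x ^ (-a) * (1 - x / y) = x ^ (-a) - x ^ (-a) * (x / y) := by ring
    linarith [h2, h3]
  have hDnn : 0 ≤ x ^ (-a) - y ^ (-a) :=
    sub_nonneg.mpr (Real.rpow_le_rpow_of_nonpos hx hxy.le (by linarith))
  -- main comparison
  have hmono : (∫ z in Set.Ioc x y, (z ^ (-a) - c) ^ 2)
      ≤ ∫ _ in Set.Ioc x y, (x ^ (-a) - y ^ (-a)) ^ 2 ∂volume := by
    apply integral_mono_of_nonneg
    · exact Filter.Eventually.of_forall fun z => sq_nonneg _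
    · exact hci _
    · refine (ae_restrict_iff' measurableSet_Ioc).mpr (Filter.Eventually.of_forall fun z hz => ?_)
      apply sq_le_sq'
      · nlinarith [hlo z hz, hcup]
      · nlinarith [hup z hz, hclo]
  rw [hconstint] at hmono
  calc (∫ z in Set.Ioc x y, (z ^ (-a) - c) ^ 2) ≤ (y - x) * (x ^ (-a) - y ^ (-a)) ^ 2 := hmono
    _ ≤ (x ^ (-a-1) * (y - x)) ^ 2 * (y - x) := by
        have hsq : (x ^ (-a) - y ^ (-a)) ^ 2 ≤ (x ^ (-a-1) * (y - x)) ^ 2 := by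
          nlinarith [mul_self_le_mul_self hDnn hD]
        nlinarith [mul_le_mul_of_nonneg_left hsq hlen.le]

lemma aux_err0 (a : ℝ) (ha0 : 0 < a) (ha1 : a < 1/2) {t : ℝ} (ht : 0 < t) :
    ∫ z in Set.Ioc 0 t, (z ^ (-a) - t⁻¹ * ∫ z in Set.Ioc 0 t, z ^ (-a)) ^ 2
      ≤ (2/(1-2*a) + 8) * t ^ (1-2*a) := by
  have h1a : 0 < 1 - a := by linarith
  have h2a : 0 < 1 - 2*a := by linarith
  have hI : (∫ z in Set.Ioc 0 t, z ^ (-a)) = t ^ (1-a) / (1-a) := by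
    rw [← intervalIntegral.integral_of_le ht.le,
      integral_rpow (Or.inl (by linarith : (-1:ℝ) < -a)),
      Real.zero_rpow (by linarith : -a + 1 ≠ 0)]
    ring_nf
  have hI2 : (∫ z in Set.Ioc 0 t, z ^ (-(2*a))) = t ^ (1-2*a) / (1-2*a) := by
    rw [← intervalIntegral.integral_of_le ht.le,
      integral_rpow (Or.inl (by linarith : (-1:ℝ) < -(2*a))),
      Real.zero_rpow (by linarith : -(2*a) + 1 ≠ 0)]
    ring_nf
  have hint2 : IntegrableOn (fun z : ℝ => z ^ (-(2*a))) (Set.Ioc 0 t) volume :=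
    (intervalIntegrable_iff_integrableOn_Ioc_of_le ht.le).mp
      (intervalIntegral.intervalIntegrable_rpow' (by linarith))
  have hci : ∀ r : ℝ, IntegrableOn (fun _ : ℝ => r) (Set.Ioc 0 t) volume := fun r =>
    integrableOn_const (by rw [Real.volume_Ioc]; exact ENNReal.ofReal_ne_top)
  have hconstint : ∀ r : ℝ, ∫ _ in Set.Ioc 0 t, r ∂volume = t * r := by
    intro r
    rw [setIntegral_const, measureReal_def, Real.volume_Ioc, sub_zero, ENNReal.toReal_ofReal ht.le, smul_eq_mul]
  set c : ℝ := t⁻¹ * ∫ z in Set.Ioc 0 t, z ^ (-a) with hcdef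
  have hc : c = t ^ (-a) / (1-a) := by
    rw [hcdef, hI, show (-a) = 1 - a - 1 by ring, Real.rpow_sub_one ht.ne' (1-a)]
    field_simp
  have hg : IntegrableOn (fun z : ℝ => 2 * z ^ (-(2*a)) + 2 * c^2) (Set.Ioc 0 t) volume :=
    (hint2.const_mul 2).add (hci (2 * c^2))
  have hmono : (∫ z in Set.Ioc 0 t, (z ^ (-a) - c) ^ 2)
      ≤ ∫ z in Set.Ioc 0 t, (2 * z ^ (-(2*a)) + 2 * c^2) := by
    apply integral_mono_of_nonneg
    · exact Filter.Eventually.of_forall fun z => sq_nonneg _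
    · exact hg
    · refine (ae_restrict_iff' measurableSet_Ioc).mpr (Filter.Eventually.of_forall fun z hz => ?_)
      have hz0 : 0 < z := hz.1
      have hsq : z ^ (-a) * z ^ (-a) = z ^ (-(2*a)) := by
        rw [← Real.rpow_add hz0]; ring_nf
      show (z ^ (-a) - c) ^ 2 ≤ 2 * z ^ (-(2*a)) + 2 * c^2
      nlinarith [sq_nonneg (z ^ (-a) + c), hsq]
  have hval : (∫ z in Set.Ioc 0 t, (2 * z ^ (-(2*a)) + 2 * c^2))
      = 2 * (t ^ (1-2*a) / (1-2*a)) + t * (2 * c^2) := by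
    rw [integral_add (hint2.const_mul 2) (hci (2 * c^2)), integral_const_mul, hI2,
      hconstint (2 * c^2)]
  have hct : t * c^2 = t ^ (1-2*a) / (1-a)^2 := by
    rw [hc, div_pow, pow_two, ← Real.rpow_add ht]
    rw [show (1-2*a) = (-a + -a) + 1 by ring, Real.rpow_add_one ht.ne']
    ring
  have htp : 0 < t ^ (1-2*a) := Real.rpow_pos_of_pos ht _
  have hfinal : 2 * (t ^ (1-2*a) / (1-2*a)) + t * (2 * c^2) ≤ (2/(1-2*a) + 8) * t ^ (1-2*a) := by
    have h8 : t * (2 * c^2) ≤ 8 * t ^ (1-2*a) := by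
      have e : t * (2 * c^2) = 2 * (t ^ (1-2*a) / (1-a)^2) := by rw [← hct]; ring
      have hpos : (0:ℝ) < (1-a)^2 := by positivity
      have hq : t ^ (1-2*a) / (1-a)^2 ≤ 4 * t ^ (1-2*a) := by
        have hq2 : (1:ℝ)/4 ≤ (1-a)^2 := by nlinarith [h2a]
        rw [div_le_iff₀ hpos]
        nlinarith [mul_le_mul_of_nonneg_left hq2 (by positivity : (0:ℝ) ≤ 4 * t ^ (1-2*a))]
      rw [e]; linarith
    have : 2 * (t ^ (1-2*a) / (1-2*a)) = 2/(1-2*a) * t ^ (1-2*a) := by ring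
    linarith
  calc (∫ z in Set.Ioc 0 t, (z ^ (-a) - c) ^ 2)
      ≤ 2 * (t ^ (1-2*a) / (1-2*a)) + t * (2 * c^2) := le_of_le_of_eq hmono hval
    _ ≤ (2/(1-2*a) + 8) * t ^ (1-2*a) := hfinal

/-- Lemma 7 (s = 0 case): L² error of the piecewise-constant (mean value) approximation
of y^{-a}, 0 < a < 1/2, on the β-graded mesh y_k = (k/N)^β, β ≥ 1:
‖f - Π⁰f‖_{L²(0,1)} ≤ C · N^{-min{β(1/2-a),1} + ε} for every ε > 0, C independent of N. -/
theorem stmt_5 (a β : ℝ) (ha0 : 0 < a) (ha1 : a < 1/2) (hβ : 1 ≤ β) :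
    ∀ ε : ℝ, 0 < ε → ∃ C : ℝ, 0 < C ∧ ∀ N : ℕ, 1 ≤ N →
      Real.sqrt (∑ k ∈ Finset.Icc 1 N,
        ∫ y in Set.Ioc ((((k:ℝ) - 1)/N) ^ β) (((k:ℝ)/N) ^ β),
          (y ^ (-a) - (((k:ℝ)/N) ^ β - (((k:ℝ) - 1)/N) ^ β)⁻¹ *
            ∫ z in Set.Ioc ((((k:ℝ) - 1)/N) ^ β) (((k:ℝ)/N) ^ β), z ^ (-a))^2)
      ≤ C * (N:ℝ) ^ (-(min (β*(1/2 - a)) 1) + ε) := by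
  intro ε hε
  have hβ0 : 0 < β := lt_of_lt_of_le one_pos hβ
  have h2a : 0 < 1 - 2*a := by linarith
  set q : ℝ := β * (1 - 2*a) with hqdef
  have hq0 : 0 < q := mul_pos hβ0 h2a
  set M : ℝ := max (q - 2) 0 with hMdef
  have hM0 : 0 ≤ M := le_max_right _ _
  set δ : ℝ := min ε 1 with hδdef
  have hδ0 : 0 < δ := lt_min hε one_pos
  have hδ1 : δ ≤ 1 := min_le_right _ _
  have hδε : δ ≤ ε := min_le_left _ _
  set K : ℝ := 2/(1-2*a) + 8 with hKdef
  have hK0 : 0 < K := by rw [hKdef]; positivity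
  set C₁ : ℝ := β^3 * ((2:ℝ) ^ (β*(a+1)))^2 with hC₁def
  have hC₁0 : 0 < C₁ := by rw [hC₁def]; positivity
  set C₂ : ℝ := K + C₁/δ with hC₂def
  have hC₂0 : 0 < C₂ := by rw [hC₂def]; positivity
  refine ⟨Real.sqrt C₂, Real.sqrt_pos.mpr hC₂0, ?_⟩
  intro N hN
  set r : ℝ := -(min (β*(1/2 - a)) 1) + ε with hrdef
  have hN0 : (0:ℝ) < (N:ℝ) := by
    have : 0 < N := hN
    exact_mod_cast this
  have hN1 : (1:ℝ) ≤ (N:ℝ) := by exact_mod_cast hN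
  have hμ : M - q = -2 * min (β*(1/2 - a)) 1 := by
    have hhalf : β*(1/2 - a) = q/2 := by rw [hqdef]; ring
    rcases le_total q 2 with h | h
    · rw [hMdef, max_eq_right (by linarith), hhalf, min_eq_left (by linarith)]; ring
    · rw [hMdef, max_eq_left (by linarith), hhalf, min_eq_right (by linarith)]; ring
  -- final square-root manipulation
  have hfinal : Real.sqrt (C₂ * (N:ℝ) ^ (M - q + δ)) ≤ Real.sqrt C₂ * (N:ℝ) ^ r := by
    have h1 : C₂ * (N:ℝ) ^ (M - q + δ) ≤ C₂ * (N:ℝ) ^ (r + r) := by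
      apply mul_le_mul_of_nonneg_left _ hC₂0.le
      apply Real.rpow_le_rpow_of_exponent_le hN1
      rw [hrdef]; linarith [hμ]
    have h2 : Real.sqrt (C₂ * (N:ℝ) ^ (r + r)) = Real.sqrt C₂ * (N:ℝ) ^ r := by
      rw [Real.rpow_add hN0, Real.sqrt_mul hC₂0.le,
        Real.sqrt_mul_self (Real.rpow_nonneg hN0.le r)]
    exact (Real.sqrt_le_sqrt h1).trans_eq h2
  refine le_trans (Real.sqrt_le_sqrt ?_) hfinal
  -- now bound the sum itself
  have hsplit : Finset.Icc 1 N = insert 1 (Finset.Icc 2 N) := by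
    ext m; simp only [Finset.mem_Icc, Finset.mem_insert]; omega
  rw [hsplit, Finset.sum_insert (by simp)]
  -- first term
  have hterm1 : (∫ y in Set.Ioc (((((1:ℕ):ℝ) - 1)/(N:ℝ)) ^ β) ((((1:ℕ):ℝ)/(N:ℝ)) ^ β),
      (y ^ (-a) - (((((1:ℕ):ℝ)/(N:ℝ)) ^ β) - (((((1:ℕ):ℝ) - 1)/(N:ℝ)) ^ β))⁻¹ *
        ∫ z in Set.Ioc (((((1:ℕ):ℝ) - 1)/(N:ℝ)) ^ β) ((((1:ℕ):ℝ)/(N:ℝ)) ^ β), z ^ (-a))^2)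
      ≤ K * (N:ℝ) ^ (-q) := by
    simp only [Nat.cast_one, sub_self, zero_div, Real.zero_rpow hβ0.ne', sub_zero]
    have ht0 : (0:ℝ) < ((1:ℝ)/(N:ℝ)) ^ β := Real.rpow_pos_of_pos (by positivity) β
    have hb := aux_err0 a ha0 ha1 ht0
    have hpow : (((1:ℝ)/(N:ℝ)) ^ β) ^ (1-2*a) = (N:ℝ) ^ (-q) := by
      rw [← Real.rpow_mul (by positivity : (0:ℝ) ≤ 1/(N:ℝ)), one_div,
        Real.inv_rpow hN0.le, ← Real.rpow_neg hN0.le, hqdef]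
    calc _ ≤ (2/(1-2*a) + 8) * (((1:ℝ)/(N:ℝ)) ^ β) ^ (1-2*a) := hb
      _ = K * (N:ℝ) ^ (-q) := by rw [hpow, hKdef]
  -- generic terms, k ≥ 2
  have hterm2 : ∀ k ∈ Finset.Icc 2 N,
      (∫ y in Set.Ioc ((((k:ℝ) - 1)/(N:ℝ)) ^ β) (((k:ℝ)/(N:ℝ)) ^ β),
      (y ^ (-a) - ((((k:ℝ)/(N:ℝ)) ^ β) - ((((k:ℝ) - 1)/(N:ℝ)) ^ β))⁻¹ *
        ∫ z in Set.Ioc ((((k:ℝ) - 1)/(N:ℝ)) ^ β) (((k:ℝ)/(N:ℝ)) ^ β), z ^ (-a))^2)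
      ≤ C₁ * (N:ℝ) ^ (-q) * ((N:ℝ) ^ M * (k:ℝ) ^ (δ - 1)) := by
    intro k hk
    obtain ⟨hk2, hkN⟩ := Finset.mem_Icc.mp hk
    have hκ2 : (2:ℝ) ≤ (k:ℝ) := by exact_mod_cast hk2
    have hκN : (k:ℝ) ≤ (N:ℝ) := by exact_mod_cast hkN
    have hκ0 : (0:ℝ) < (k:ℝ) := by linarith
    have hκ1 : (1:ℝ) ≤ (k:ℝ) := by linarith
    set u : ℝ := ((k:ℝ) - 1)/(N:ℝ) with hudef
    set v : ℝ := (k:ℝ)/(N:ℝ) with hvdef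
    have hu0 : 0 < u := by
      rw [hudef]; apply div_pos _ hN0; linarith
    have hv0 : 0 < v := by rw [hvdef]; positivity
    have huv : u < v := by
      rw [hudef, hvdef, div_lt_div_iff_of_pos_right hN0]
      linarith
    have hx : 0 < u ^ β := Real.rpow_pos_of_pos hu0 β
    have hxy : u ^ β < v ^ β := Real.rpow_lt_rpow hu0.le huv hβ0
    have hbase := aux_err a ha0 (by linarith : a < 1) hx hxy
    have hLnn : 0 ≤ v ^ β - u ^ β := by linarith
    -- length bound
    have hratio : (v - u)/v = 1/(k:ℝ) := by
      rw [hudef, hvdef]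
      field_simp; ring
    have hL : v ^ β - u ^ β ≤ β * v ^ β * (1/(k:ℝ)) := by
      have := aux_rpow_sub β hβ hu0.le huv.le hv0
      rwa [hratio] at this
    -- lower bound on u^β via v/2
    have hhalf : v/2 ≤ u := by
      rw [hudef, hvdef]
      have h : (k:ℝ)/2 ≤ (k:ℝ) - 1 := by linarith
      calc (k:ℝ)/(N:ℝ)/2 = ((k:ℝ)/2)/(N:ℝ) := by ring
        _ ≤ ((k:ℝ)-1)/(N:ℝ) := by gcongr
    have hv2 : (0:ℝ) < v/2 := by positivity
    have hx2 : (v/2) ^ β ≤ u ^ β := Real.rpow_le_rpow hv2.le hhalf hβ0.le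
    have hv2b : (0:ℝ) < (v/2) ^ β := Real.rpow_pos_of_pos hv2 β
    have hxe : (u ^ β) ^ (-a-1) ≤ ((v/2) ^ β) ^ (-a-1) :=
      Real.rpow_le_rpow_of_nonpos hv2b hx2 (by linarith)
    have hvb : ((v/2) ^ β) ^ (-a-1) = (2:ℝ) ^ (β*(a+1)) * v ^ (β*(-a-1)) := by
      rw [← Real.rpow_mul hv2.le β (-a-1), Real.div_rpow hv0.le (by norm_num : (0:ℝ) ≤ 2),
        show β*(-a-1) = -(β*(a+1)) by ring, Real.rpow_neg (by norm_num : (0:ℝ) ≤ 2),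
        div_inv_eq_mul, mul_comm]
    have hEP : (u ^ β) ^ (-a-1) * (v ^ β - u ^ β)
        ≤ ((2:ℝ) ^ (β*(a+1)) * v ^ (β*(-a-1))) * (β * v ^ β * (1/(k:ℝ))) :=
      mul_le_mul (hxe.trans_eq hvb) hL hLnn (by positivity)
    have hRnn : (0:ℝ) ≤ ((2:ℝ) ^ (β*(a+1)) * v ^ (β*(-a-1))) * (β * v ^ β * (1/(k:ℝ))) := by
      positivity
    have hsq : ((u ^ β) ^ (-a-1) * (v ^ β - u ^ β))^2
        ≤ (((2:ℝ) ^ (β*(a+1)) * v ^ (β*(-a-1))) * (β * v ^ β * (1/(k:ℝ))))^2 :=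
      pow_le_pow_left₀ (mul_nonneg (Real.rpow_nonneg (Real.rpow_nonneg hu0.le β) _) hLnn) hEP 2
    have hT : (∫ z in Set.Ioc (u ^ β) (v ^ β),
        (z ^ (-a) - (v ^ β - u ^ β)⁻¹ * ∫ z in Set.Ioc (u ^ β) (v ^ β), z ^ (-a)) ^ 2)
        ≤ (((2:ℝ) ^ (β*(a+1)) * v ^ (β*(-a-1))) * (β * v ^ β * (1/(k:ℝ))))^2
        * (β * v ^ β * (1/(k:ℝ))) := by
      refine hbase.trans ?_
      calc ((u ^ β) ^ (-a-1) * (v ^ β - u ^ β))^2 * (v ^ β - u ^ β)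
          ≤ (((2:ℝ) ^ (β*(a+1)) * v ^ (β*(-a-1))) * (β * v ^ β * (1/(k:ℝ))))^2
              * (v ^ β - u ^ β) := mul_le_mul_of_nonneg_right hsq hLnn
        _ ≤ _ := mul_le_mul_of_nonneg_left hL (sq_nonneg _)
    -- algebra: collapse powers of v
    have hvq : v ^ (β*(-a-1)) * v ^ (β*(-a-1)) * (v ^ β * (v ^ β * v ^ β)) = v ^ q := by
      rw [← Real.rpow_add hv0, ← Real.rpow_add hv0, ← Real.rpow_add hv0, ← Real.rpow_add hv0]
      rw [hqdef]; congr 1; ring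
    have halg : (((2:ℝ) ^ (β*(a+1)) * v ^ (β*(-a-1))) * (β * v ^ β * (1/(k:ℝ))))^2
        * (β * v ^ β * (1/(k:ℝ)))
        = C₁ * (v ^ (β*(-a-1)) * v ^ (β*(-a-1)) * (v ^ β * (v ^ β * v ^ β))) * (1/(k:ℝ))^3 := by
      rw [hC₁def]; ring
    have hvN : v ^ q = (k:ℝ) ^ q * (N:ℝ) ^ (-q) := by
      rw [hvdef, Real.div_rpow hκ0.le hN0.le, Real.rpow_neg hN0.le, div_eq_mul_inv]
    have hk3 : (1/(k:ℝ))^(3:ℕ) = (k:ℝ) ^ (-(3:ℝ)) := by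
      rw [one_div, inv_pow, Real.rpow_neg hκ0.le, ← Real.rpow_natCast (k:ℝ) 3]
      norm_num
    have hκb : (k:ℝ) ^ q * (k:ℝ) ^ (-(3:ℝ)) ≤ (N:ℝ) ^ M * (k:ℝ) ^ (δ - 1) := by
      rw [← Real.rpow_add hκ0]
      have h1 : (k:ℝ) ^ (q + -(3:ℝ)) ≤ (k:ℝ) ^ (M + (δ - 1)) := by
        apply Real.rpow_le_rpow_of_exponent_le hκ1
        have hqM : q - 2 ≤ M := le_max_left _ _
        linarith
      have h2 : (k:ℝ) ^ (M + (δ - 1)) = (k:ℝ) ^ M * (k:ℝ) ^ (δ - 1) := Real.rpow_add hκ0 _ _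
      have h3 : (k:ℝ) ^ M ≤ (N:ℝ) ^ M := Real.rpow_le_rpow hκ0.le hκN hM0
      calc (k:ℝ) ^ (q + -(3:ℝ)) ≤ (k:ℝ) ^ M * (k:ℝ) ^ (δ - 1) := h1.trans_eq h2
        _ ≤ (N:ℝ) ^ M * (k:ℝ) ^ (δ - 1) :=
            mul_le_mul_of_nonneg_right h3 (Real.rpow_nonneg hκ0.le _)
    refine hT.trans ?_
    rw [halg, hvq, hvN]
    calc C₁ * ((k:ℝ) ^ q * (N:ℝ) ^ (-q)) * (1/(k:ℝ))^3
        = C₁ * (N:ℝ) ^ (-q) * ((k:ℝ) ^ q * (k:ℝ) ^ (-(3:ℝ))) := by rw [hk3]; ring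
      _ ≤ C₁ * (N:ℝ) ^ (-q) * ((N:ℝ) ^ M * (k:ℝ) ^ (δ - 1)) := by
          apply mul_le_mul_of_nonneg_left hκb
          positivity
  -- sum the tail
  have hsum2 : (∑ k ∈ Finset.Icc 2 N,
      (∫ y in Set.Ioc ((((k:ℝ) - 1)/(N:ℝ)) ^ β) (((k:ℝ)/(N:ℝ)) ^ β),
      (y ^ (-a) - ((((k:ℝ)/(N:ℝ)) ^ β) - ((((k:ℝ) - 1)/(N:ℝ)) ^ β))⁻¹ *
        ∫ z in Set.Ioc ((((k:ℝ) - 1)/(N:ℝ)) ^ β) (((k:ℝ)/(N:ℝ)) ^ β), z ^ (-a))^2))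
      ≤ C₁ * (N:ℝ) ^ (-q) * ((N:ℝ) ^ M * ((N:ℝ) ^ δ / δ)) := by
    calc _ ≤ ∑ k ∈ Finset.Icc 2 N, C₁ * (N:ℝ) ^ (-q) * ((N:ℝ) ^ M * (k:ℝ) ^ (δ - 1)) :=
          Finset.sum_le_sum hterm2
      _ = (C₁ * (N:ℝ) ^ (-q) * (N:ℝ) ^ M) * ∑ k ∈ Finset.Icc 2 N, (k:ℝ) ^ (δ - 1) := by
          rw [Finset.mul_sum]
          exact Finset.sum_congr rfl fun k _ => by ring
      _ ≤ (C₁ * (N:ℝ) ^ (-q) * (N:ℝ) ^ M) * ((N:ℝ) ^ δ / δ) := by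
          apply mul_le_mul_of_nonneg_left (aux_sum_rpow δ hδ0 hδ1 N)
          positivity
      _ = C₁ * (N:ℝ) ^ (-q) * ((N:ℝ) ^ M * ((N:ℝ) ^ δ / δ)) := by ring
  -- combine
  have e1 : K * (N:ℝ) ^ (-q) ≤ K * (N:ℝ) ^ (M - q + δ) := by
    apply mul_le_mul_of_nonneg_left _ hK0.le
    apply Real.rpow_le_rpow_of_exponent_le hN1
    linarith
  have e2 : C₁ * (N:ℝ) ^ (-q) * ((N:ℝ) ^ M * ((N:ℝ) ^ δ / δ)) = (C₁/δ) * (N:ℝ) ^ (M - q + δ) := by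
    rw [show M - q + δ = -q + M + δ by ring, Real.rpow_add hN0, Real.rpow_add hN0]
    ring
  rw [hC₂def, add_mul]
  have := hsum2.trans_eq e2
  exact add_le_add (hterm1.trans e1) this
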